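/- There is a well-defined linear map ρ_k: A^k → H^{k+1}(N_0, D̄) given by ρ_k(ξ) = [D_{2,-1}ξ_{k-1,1} + D_{1,0}η_{k,0}], where η ∈ C^k is any element with π_1(η) = ξ and π_1(Dη) = 0: the cohomology class is independent of the choice of η. Moreover ker(ρ_k) equals the module Z^k_1 of pre-cocycles of second degree ≥ 1. -/

import Mathlib

open DirectSum

variable {R M : Type} [CommRing R] [AddCommGroup M] [Module R M]

/-- Projection `π_q` of a bigraded module onto the part of second degree `≥ q`,
along the bigrading. -/
noncomputable def bproj (𝒞 : ℤ × ℤ → Submodule R M) [DirectSum.Decomposition 𝒞] (q : ℤ) :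
    M →ₗ[R] M :=
  (DirectSum.coeLinearMap 𝒞).comp <|
    (DFinsupp.filterLinearMap R (fun pq : ℤ × ℤ => 𝒞 pq) (fun pq => q ≤ pq.2)).comp
      (DirectSum.decomposeLinearEquiv 𝒞).toLinearMap

/-- The bihomogeneous component of bidegree `(p, q)` of an element. -/
noncomputable def bcomp (𝒞 : ℤ × ℤ → Submodule R M) [DirectSum.Decomposition 𝒞] (p q : ℤ)
    (x : M) : M :=
  (DirectSum.decompose 𝒞 x (p, q) : M)

/-- The total-degree-`k` part `C^k = ⊕_{p+q=k} C^{p,q}`. -/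
def bdeg (𝒞 : ℤ × ℤ → Submodule R M) (k : ℤ) : Submodule R M :=
  ⨆ p : ℤ, 𝒞 (p, k - p)

/-- The part of second degree `q`, `⊕_p C^{p,q}`. -/
def brow (𝒞 : ℤ × ℤ → Submodule R M) (q : ℤ) : Submodule R M :=
  ⨆ p : ℤ, 𝒞 (p, q)

/-- The decreasing column filtration `F^p C = ⊕_{i ≥ p, j} C^{i,j}`. -/
def bfil (𝒞 : ℤ × ℤ → Submodule R M) (p : ℤ) : Submodule R M :=
  ⨆ (i : ℤ) (_ : p ≤ i) (j : ℤ), 𝒞 (i, j)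

lemma bproj_of_mem (𝒞 : ℤ × ℤ → Submodule R M) [DirectSum.Decomposition 𝒞] (q₀ p q : ℤ)
    (x : M) (hx : x ∈ 𝒞 (p, q)) : bproj 𝒞 q₀ x = if q₀ ≤ q then x else 0 := by
  have h : DirectSum.decompose 𝒞 x = DirectSum.of (fun i => 𝒞 i) (p, q) ⟨x, hx⟩ :=
    DirectSum.decompose_coe 𝒞 (⟨x, hx⟩ : 𝒞 (p, q))
  have h2 : bproj 𝒞 q₀ x = (DirectSum.coeLinearMap 𝒞)
      (DFinsupp.filter (fun pq => q₀ ≤ pq.2) (DirectSum.decompose 𝒞 x)) := rfl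
  rw [h2, h]
  erw [DFinsupp.filter_single]
  split_ifs with hq
  · erw [DirectSum.coeLinearMap_of]
  · simp

lemma bcomp_of_mem (𝒞 : ℤ × ℤ → Submodule R M) [DirectSum.Decomposition 𝒞] (p' q' p q : ℤ)
    (x : M) (hx : x ∈ 𝒞 (p, q)) : bcomp 𝒞 p' q' x = if (p, q) = (p', q') then x else 0 := by
  have h : DirectSum.decompose 𝒞 x = DirectSum.of (fun i => 𝒞 i) (p, q) ⟨x, hx⟩ :=
    DirectSum.decompose_coe 𝒞 (⟨x, hx⟩ : 𝒞 (p, q))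
  simp only [bcomp, h]
  rw [DirectSum.coe_of_apply]
  split_ifs <;> simp

/-- `bcomp` as a linear map. -/
noncomputable def bcompL (𝒞 : ℤ × ℤ → Submodule R M) [DirectSum.Decomposition 𝒞] (p q : ℤ) :
    M →ₗ[R] M :=
  (𝒞 (p, q)).subtype ∘ₗ (DirectSum.component R (ℤ × ℤ) (fun pq => 𝒞 pq) (p, q)) ∘ₗ
    (DirectSum.decomposeLinearEquiv 𝒞).toLinearMap

lemma bcompL_apply (𝒞 : ℤ × ℤ → Submodule R M) [DirectSum.Decomposition 𝒞] (p q : ℤ) (x : M) :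
    bcompL 𝒞 p q x = bcomp 𝒞 p q x := rfl

lemma bcomp_mem (𝒞 : ℤ × ℤ → Submodule R M) [DirectSum.Decomposition 𝒞] (p q : ℤ) (x : M) :
    bcomp 𝒞 p q x ∈ 𝒞 (p, q) := SetLike.coe_mem _

lemma C_le_bdeg (𝒞 : ℤ × ℤ → Submodule R M) (k : ℤ) : 𝒞 (k, 0) ≤ bdeg 𝒞 k := by
  have h := le_iSup (fun p => 𝒞 (p, k - p)) k
  simpa [bdeg] using h

/-- Key structural lemma: decomposition of an element of total degree k. -/
lemma keyEta (𝒞 : ℤ × ℤ → Submodule R M) [DirectSum.Decomposition 𝒞]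
    (hfq : ∀ p q : ℤ, p < 0 ∨ q < 0 → 𝒞 (p, q) = ⊥) (k : ℤ) :
    ∀ η ∈ bdeg 𝒞 k, η = bproj 𝒞 1 η + bcomp 𝒞 k 0 η := by
  have hle : bdeg 𝒞 k ≤ LinearMap.ker (LinearMap.id - (bproj 𝒞 1 + bcompL 𝒞 k 0)) := by
    refine iSup_le fun p => ?_
    intro x hx
    simp only [LinearMap.mem_ker, LinearMap.sub_apply, LinearMap.add_apply, LinearMap.id_apply,
      bcompL_apply, sub_eq_zero]
    rw [bproj_of_mem 𝒞 1 p (k - p) x hx, bcomp_of_mem 𝒞 k 0 p (k - p) x hx]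
    by_cases hneg : k - p < 0
    · have hx0 : x = 0 := by rw [hfq p (k - p) (Or.inr hneg)] at hx; simpa using hx
      simp [hx0]
    by_cases h0 : k - p = 0
    · rw [if_neg (by omega), if_pos (by simp [Prod.ext_iff]; omega)]
      simp
    · rw [if_pos (by omega), if_neg (by simp [Prod.ext_iff]; omega)]
      simp
  intro η hη
  have := hle hη
  simp only [LinearMap.mem_ker, LinearMap.sub_apply, LinearMap.add_apply, LinearMap.id_apply,
    bcompL_apply, sub_eq_zero] at this
  exact this

/-- Key computational lemma: `D η` in terms of its projection and the boundary term. -/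
lemma keyDeq (𝒞 : ℤ × ℤ → Submodule R M) [DirectSum.Decomposition 𝒞]
    (hfq : ∀ p q : ℤ, p < 0 ∨ q < 0 → 𝒞 (p, q) = ⊥)
    (D21 D10 D01 : M →ₗ[R] M)
    (h21 : ∀ p q : ℤ, (𝒞 (p, q)).map D21 ≤ 𝒞 (p + 2, q - 1))
    (h10 : ∀ p q : ℤ, (𝒞 (p, q)).map D10 ≤ 𝒞 (p + 1, q))
    (h01 : ∀ p q : ℤ, (𝒞 (p, q)).map D01 ≤ 𝒞 (p, q + 1))
    (D : M →ₗ[R] M) (hDdef : D = D21 + D10 + D01) (k : ℤ) :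
    ∀ η ∈ bdeg 𝒞 k,
      D η = bproj 𝒞 1 (D η) + (D21 (bcomp 𝒞 (k - 1) 1 η) + D10 (bcomp 𝒞 k 0 η)) := by
  have hle : bdeg 𝒞 k ≤ LinearMap.ker
      (D - (bproj 𝒞 1 ∘ₗ D + (D21 ∘ₗ bcompL 𝒞 (k - 1) 1 + D10 ∘ₗ bcompL 𝒞 k 0))) := by
    refine iSup_le fun p => ?_
    intro x hx
    simp only [LinearMap.mem_ker, LinearMap.sub_apply, LinearMap.add_apply,
      LinearMap.comp_apply, bcompL_apply, sub_eq_zero]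
    have hD21 : D21 x ∈ 𝒞 (p + 2, (k - p) - 1) := h21 p (k - p) ⟨x, hx, rfl⟩
    have hD10 : D10 x ∈ 𝒞 (p + 1, k - p) := h10 p (k - p) ⟨x, hx, rfl⟩
    have hD01 : D01 x ∈ 𝒞 (p, (k - p) + 1) := h01 p (k - p) ⟨x, hx, rfl⟩
    rw [hDdef]
    simp only [LinearMap.add_apply]
    rw [map_add, map_add, bproj_of_mem 𝒞 1 (p + 2) ((k - p) - 1) (D21 x) hD21,
      bproj_of_mem 𝒞 1 (p + 1) (k - p) (D10 x) hD10,
      bproj_of_mem 𝒞 1 p ((k - p) + 1) (D01 x) hD01,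
      bcomp_of_mem 𝒞 (k - 1) 1 p (k - p) x hx, bcomp_of_mem 𝒞 k 0 p (k - p) x hx]
    by_cases hneg : k - p < 0
    · have hx0 : x = 0 := by rw [hfq p (k - p) (Or.inr hneg)] at hx; simpa using hx
      simp [hx0]
    by_cases h0 : k - p = 0
    · have hz : D21 x = 0 := by
        rw [hfq (p + 2) ((k - p) - 1) (Or.inr (by omega))] at hD21; simpa using hD21
      rw [if_neg (by omega), if_neg (by omega), if_pos (by omega),
        if_neg (by simp [Prod.ext_iff]; omega), if_pos (by simp [Prod.ext_iff]; omega)]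
      simp [hz]; abel
    by_cases h1 : k - p = 1
    · rw [if_neg (by omega), if_pos (by omega), if_pos (by omega),
        if_pos (by simp [Prod.ext_iff]; omega), if_neg (by simp [Prod.ext_iff]; omega)]
      simp; abel
    · rw [if_pos (by omega), if_pos (by omega), if_pos (by omega),
        if_neg (by simp [Prod.ext_iff]; omega), if_neg (by simp [Prod.ext_iff]; omega)]
      simp
  intro η hη
  have := hle hη
  simp only [LinearMap.mem_ker, LinearMap.sub_apply, LinearMap.add_apply,
    LinearMap.comp_apply, bcompL_apply, sub_eq_zero] at this
  exact this

theorem statement11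
    (𝒞 : ℤ × ℤ → Submodule R M) [DirectSum.Decomposition 𝒞]
    (hfq : ∀ p q : ℤ, p < 0 ∨ q < 0 → 𝒞 (p, q) = ⊥)
    (D21 D10 D01 : M →ₗ[R] M)
    (h21 : ∀ p q : ℤ, (𝒞 (p, q)).map D21 ≤ 𝒞 (p + 2, q - 1))
    (h10 : ∀ p q : ℤ, (𝒞 (p, q)).map D10 ≤ 𝒞 (p + 1, q))
    (h01 : ∀ p q : ℤ, (𝒞 (p, q)).map D01 ≤ 𝒞 (p, q + 1))
    (D : M →ₗ[R] M) (hDdef : D = D21 + D10 + D01) (hD : D ∘ₗ D = 0)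
    (k : ℤ)
    -- `BN` : the (k+1)-coboundaries of the null subcomplex `N₀`
    (BN : Submodule R M)
    (hBN : BN = Submodule.map D10
      ((LinearMap.ker D01 ⊓ LinearMap.ker D21) ⊓ 𝒞 (k, 0))) :
    -- `ρ_k` is well defined: the class is independent of the choice of lift
    (∀ η η' : M, η ∈ bdeg 𝒞 k → η' ∈ bdeg 𝒞 k →
      bproj 𝒞 1 η = bproj 𝒞 1 η' →
      bproj 𝒞 1 (D η) = 0 → bproj 𝒞 1 (D η') = 0 →
      (D21 (bcomp 𝒞 (k - 1) 1 η) + D10 (bcomp 𝒞 k 0 η)) -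
        (D21 (bcomp 𝒞 (k - 1) 1 η') + D10 (bcomp 𝒞 k 0 η')) ∈ BN) ∧
    -- `ker ρ_k = Z^k_1 = π_1(Z^k(C,D))`
    {ξ : M | ∃ η, η ∈ bdeg 𝒞 k ∧ bproj 𝒞 1 η = ξ ∧ bproj 𝒞 1 (D η) = 0 ∧
        D21 (bcomp 𝒞 (k - 1) 1 η) + D10 (bcomp 𝒞 k 0 η) ∈ BN} =
      (Submodule.map (bproj 𝒞 1) (bdeg 𝒞 k ⊓ LinearMap.ker D) : Set M) := by
  have keyD := keyDeq 𝒞 hfq D21 D10 D01 h21 h10 h01 D hDdef k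
  have keyE := keyEta 𝒞 hfq k
  constructor
  · intro η η' hη hη' hpeq hDη hDη'
    have e := keyD η hη
    have e' := keyD η' hη'
    rw [hDη, zero_add] at e
    rw [hDη', zero_add] at e'
    rw [← e, ← e']
    -- μ := η - η'
    set μ := η - η' with hμ
    have hμmem : μ ∈ 𝒞 (k, 0) := by
      have h1 := keyE η hη
      have h2 := keyE η' hη'
      have : μ = bcomp 𝒞 k 0 η - bcomp 𝒞 k 0 η' := by
        rw [hμ]; nth_rewrite 1 [h1, h2]; rw [hpeq]; abel
      rw [this]
      exact sub_mem (bcomp_mem 𝒞 k 0 η) (bcomp_mem 𝒞 k 0 η')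
    have hD21μ : D21 μ = 0 := by
      have h := h21 k 0 ⟨μ, hμmem, rfl⟩
      rw [hfq (k + 2) (0 - 1) (Or.inr (by omega))] at h; simpa using h
    have hD10μ : D10 μ ∈ 𝒞 (k + 1, 0) := h10 k 0 ⟨μ, hμmem, rfl⟩
    have hD01μ : D01 μ ∈ 𝒞 (k, 0 + 1) := h01 k 0 ⟨μ, hμmem, rfl⟩
    have hπDμ : bproj 𝒞 1 (D μ) = 0 := by
      rw [hμ, map_sub, map_sub, hDη, hDη', sub_zero]
    have hD01μ0 : D01 μ = 0 := by
      rw [hDdef] at hπDμ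
      simp only [LinearMap.add_apply, map_add] at hπDμ
      rw [hD21μ, map_zero, bproj_of_mem 𝒞 1 (k + 1) 0 (D10 μ) hD10μ,
        bproj_of_mem 𝒞 1 k (0 + 1) (D01 μ) hD01μ, if_neg (by omega), if_pos (by omega)] at hπDμ
      simpa using hπDμ
    have hDμ : D μ = D10 μ := by
      rw [hDdef]; simp only [LinearMap.add_apply]; rw [hD21μ, hD01μ0]; abel
    have : D η - D η' ∈ BN := by
      rw [hBN]
      refine ⟨μ, ⟨⟨?_, ?_⟩, hμmem⟩, ?_⟩
      · exact LinearMap.mem_ker.mpr hD01μ0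
      · exact LinearMap.mem_ker.mpr hD21μ
      · rw [← hDμ, hμ, map_sub]
    exact this
  · ext ξ
    simp only [Set.mem_setOf_eq, SetLike.mem_coe, Submodule.mem_map, Submodule.mem_inf,
      LinearMap.mem_ker]
    constructor
    · rintro ⟨η, hη, rfl, hπD, hbn⟩
      rw [hBN] at hbn
      obtain ⟨γ, ⟨⟨hγ01, hγ21⟩, hγC⟩, hγeq⟩ := hbn
      simp only [SetLike.mem_coe, LinearMap.mem_ker] at hγ01 hγ21 hγC
      have hγdeg : γ ∈ bdeg 𝒞 k := C_le_bdeg 𝒞 k hγC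
      have hDη : D η = D10 γ := by
        have e := keyD η hη
        rw [hπD, zero_add, ← hγeq] at e
        exact e
      have hDγ : D γ = D10 γ := by
        rw [hDdef]; simp only [LinearMap.add_apply]; rw [hγ21, hγ01]; abel
      refine ⟨η - γ, ⟨sub_mem hη hγdeg, ?_⟩, ?_⟩
      · rw [map_sub, hDη, hDγ, sub_self]
      · rw [map_sub, bproj_of_mem 𝒞 1 k 0 γ hγC, if_neg (by omega), sub_zero]
    · rintro ⟨ζ, ⟨hζdeg, hζD⟩, rfl⟩
      refine ⟨ζ, hζdeg, rfl, by rw [hζD, map_zero], ?_⟩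
      have e := keyD ζ hζdeg
      rw [hζD, map_zero, zero_add] at e
      rw [← e]
      exact BN.zero_mem
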